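/- Let P(t) = t(t-a₁)⋯(t-a_{2n}) with distinct nonzero a_i, and suppose c ∈ ℂ* and a permutation γ satisfy a_i·a_{γ(i)} = c for all i and ∏_{i=1}^{2n} a_i = c^n. Then the assignment t ↦ c·t⁻¹, √P ↦ ± t^{-n-1}·√(c^{n+1})·√P extends to a ℂ-algebra automorphism ψ of R_2(P) with ψ² = id. -/

import Mathlib

open Polynomial

/-- The defining ideal of `R_2(P) = ℂ[t,t⁻¹,u]/(u² - P(t))`. -/
noncomputable abbrev R2ideal (P : Polynomial ℂ) : Ideal (Polynomial (LaurentPolynomial ℂ)) :=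
  Ideal.span {(X : Polynomial (LaurentPolynomial ℂ)) ^ 2 - C (Polynomial.toLaurent P)}

/-- `R_2(P) = ℂ[t,t⁻¹,u]/(u² - P(t))`. -/
abbrev R2P (P : Polynomial ℂ) : Type :=
  Polynomial (LaurentPolynomial ℂ) ⧸ R2ideal P

namespace Stmt19Aux

open LaurentPolynomial (T)

local notation "LC" => LaurentPolynomial.C

/-- The monoid hom `Multiplicative ℤ →* ℂ[T,T⁻¹]`, `m ↦ c^m · T^{-m}`. -/
noncomputable def F (c : ℂ) (hc : c ≠ 0) : Multiplicative ℤ →* LaurentPolynomial ℂ where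
  toFun m := LC (c ^ (Multiplicative.toAdd m)) * T (-(Multiplicative.toAdd m))
  map_one' := by simp
  map_mul' x y := by
    have : Multiplicative.toAdd (x * y) = Multiplicative.toAdd x + Multiplicative.toAdd y := rfl
    simp only [this, zpow_add₀ hc, map_mul, neg_add, LaurentPolynomial.T_add]
    ring

/-- The algebra endomorphism of `ℂ[T,T⁻¹]` sending `T ↦ c·T⁻¹`. -/
noncomputable def σ (c : ℂ) (hc : c ≠ 0) :
    LaurentPolynomial ℂ →ₐ[ℂ] LaurentPolynomial ℂ :=
  AddMonoidAlgebra.lift ℂ _ ℤ (F c hc)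

lemma σ_T (c : ℂ) (hc : c ≠ 0) (m : ℤ) :
    σ c hc (T m) = LC (c ^ m) * T (-m) := by
  have h : (T m : LaurentPolynomial ℂ) = AddMonoidAlgebra.of' ℂ ℤ m := rfl
  rw [h, σ, AddMonoidAlgebra.lift_of']
  rfl

lemma σ_C (c : ℂ) (hc : c ≠ 0) (z : ℂ) : σ c hc (LC z) = LC z := by
  rw [LaurentPolynomial.C_eq_algebraMap, AlgHom.commutes]

lemma laurent_algHom_ext {A : Type*} [Semiring A] [Algebra ℂ A]
    {f g : LaurentPolynomial ℂ →ₐ[ℂ] A} (h : f (T 1) = g (T 1)) : f = g := by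
  apply AddMonoidAlgebra.algHom_ext'
  apply MonoidHom.ext_mint
  simpa using h
  exact Subsingleton.elim _ _

lemma key (n : ℕ) (a : Fin (2*n) → ℂ) (c : ℂ) (hc : c ≠ 0)
    (γ : Equiv.Perm (Fin (2*n))) (hγ : ∀ i, a i * a (γ i) = c)
    (hprod : ∏ i, a i = c ^ n) :
    σ c hc (Polynomial.toLaurent (X * ∏ i, (X - Polynomial.C (a i)))) =
      LC (c ^ (n+1)) * (T (-(2*(n:ℤ)+2)) * Polynomial.toLaurent (X * ∏ i, (X - Polynomial.C (a i)))) := by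
  have hQ : Polynomial.toLaurent (X * ∏ i, (X - Polynomial.C (a i)))
      = T 1 * ∏ i, (T 1 - LC (a i)) := by
    rw [map_mul, map_prod]
    simp
  rw [hQ, map_mul, map_prod, σ_T]
  have hfac : ∀ i : Fin (2*n), σ c hc (T 1 - LC (a i))
      = (LC (-(a i)) * T (-1)) * (T 1 - LC (a (γ i))) := by
    intro i
    rw [map_sub, σ_T, σ_C]
    have hT : T (-1) * T (1:ℤ) = (1 : LaurentPolynomial ℂ) := by
      rw [← LaurentPolynomial.T_add]; norm_num
    have h2 : LC (-(a i)) * T (-1) * (T 1 - LC (a (γ i)))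
        = LC (a i * a (γ i)) * T (-1) - LC (a i) * (T (-1) * T 1) := by
      simp only [map_mul, map_neg]; ring
    rw [h2, hγ i, hT, mul_one, zpow_one]
  rw [Finset.prod_congr rfl (fun i _ => hfac i), Finset.prod_mul_distrib,
    Finset.prod_mul_distrib, ← map_prod, Finset.prod_const,
    Equiv.prod_comp γ (fun i => T 1 - LC (a i))]
  have hpneg : (∏ i, (-(a i))) = c ^ n := by
    have h3 : ∀ i : Fin (2*n), -(a i) = (-1) * a i := fun i => by ring
    rw [Finset.prod_congr rfl (fun i _ => h3 i), Finset.prod_mul_distrib,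
      Finset.prod_const, hprod, Finset.card_univ, Fintype.card_fin,
      Even.neg_one_pow ⟨n, two_mul n⟩, one_mul]
  rw [hpneg, Finset.card_univ, Fintype.card_fin, LaurentPolynomial.T_pow, zpow_one]
  have harith : LC c * T (-1:ℤ) * (LC (c^n) * T ((2*n : ℕ) * (-1:ℤ)))
      = LC (c^(n+1)) * (T (-(2*(n:ℤ)+2)) * T 1) := by
    rw [← LaurentPolynomial.T_add, mul_mul_mul_comm, ← map_mul, ← LaurentPolynomial.T_add,
      ← pow_succ']
    congr 1
    push_cast
    ring_nf
  calc LC c * T (-1:ℤ) * (LC (c^n) * T ((2*n : ℕ) * (-1:ℤ)) * ∏ i, (T 1 - LC (a i)))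
      = LC c * T (-1:ℤ) * (LC (c^n) * T ((2*n : ℕ) * (-1:ℤ))) * ∏ i, (T 1 - LC (a i)) := by ring
    _ = LC (c^(n+1)) * (T (-(2*(n:ℤ)+2)) * T 1) * ∏ i, (T 1 - LC (a i)) := by rw [harith]
    _ = LC (c ^ (n+1)) * (T (-(2*(n:ℤ)+2)) * (T 1 * ∏ i, (T 1 - LC (a i)))) := by ring


variable (P : Polynomial ℂ) (c s : ℂ) (hc : c ≠ 0) (n : ℕ)

local notation "mkq" => Ideal.Quotient.mk (R2ideal P)

lemma mk_LC (z : ℂ) : @algebraMap ℂ (R2P P) inferInstance inferInstance _ z = mkq (Polynomial.C (LC z)) := by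
  rw [IsScalarTower.algebraMap_apply ℂ (Polynomial (LaurentPolynomial ℂ)) (R2P P),
    Polynomial.algebraMap_apply, LaurentPolynomial.C_eq_algebraMap]
  rfl

/-- The algebra hom `ℂ[t,t⁻¹][X] →ₐ R₂(P)` realizing `t ↦ c t⁻¹`, `X ↦ s·t^{-(n+1)}·X`. -/
noncomputable def Φ : Polynomial (LaurentPolynomial ℂ) →ₐ[ℂ] R2P P :=
  Polynomial.aevalTower
    (((Ideal.Quotient.mkₐ ℂ (R2ideal P)).comp Polynomial.CAlgHom).comp (σ c hc))
    (@algebraMap ℂ (R2P P) inferInstance inferInstance _ s * mkq (Polynomial.C (T (-((n:ℤ)+1))) * X))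

lemma Φ_C (f : LaurentPolynomial ℂ) :
    Φ P c s hc n (Polynomial.C f) = mkq (Polynomial.C (σ c hc f)) := by
  rw [Φ, Polynomial.aevalTower_C]
  rfl

lemma Φ_X :
    Φ P c s hc n X = @algebraMap ℂ (R2P P) inferInstance inferInstance _ s * mkq (Polynomial.C (T (-((n:ℤ)+1))) * X) :=
  Polynomial.aevalTower_X _ _

lemma Φ_T (m : ℤ) :
    Φ P c s hc n (Polynomial.C (T m))
      = @algebraMap ℂ (R2P P) inferInstance inferInstance _ (c ^ m) * mkq (Polynomial.C (T (-m))) := by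
  rw [Φ_C, σ_T, map_mul, map_mul, mk_LC]

end Stmt19Aux

open Stmt19Aux
open LaurentPolynomial (T)

set_option maxHeartbeats 1600000

/-- For `P = t(t-a₁)⋯(t-a_{2n})` separable with `aᵢ·a_{γ(i)} = c` for all `i`
and `∏ aᵢ = cⁿ`, the assignment `t ↦ c·t⁻¹`, `√P ↦ ±t^{-n-1}√(c^{n+1})·√P`
extends to a ℂ-algebra automorphism `ψ` of `R_2(P)` with `ψ² = id`. -/
theorem stmt_19 (n : ℕ) (hn : 1 ≤ n) (a : Fin (2 * n) → ℂ)
    (ha0 : ∀ i, a i ≠ 0) (hainj : Function.Injective a)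
    (P : Polynomial ℂ) (hP : P = X * ∏ i, (X - C (a i)))
    (c w : ℂ) (hc : c ≠ 0) (hw : w ^ 2 = c ^ (n + 1))
    (γ : Equiv.Perm (Fin (2 * n))) (hγ : ∀ i, a i * a (γ i) = c)
    (hprod : ∏ i, a i = c ^ n)
    (ε : ℂ) (hε : ε = 1 ∨ ε = -1) :
    ∃ ψ : R2P P ≃ₐ[ℂ] R2P P,
      ψ (Ideal.Quotient.mk (R2ideal P) (C (LaurentPolynomial.T 1))) =
        @algebraMap ℂ (R2P P) inferInstance inferInstance _ c *
          Ideal.Quotient.mk (R2ideal P) (C (LaurentPolynomial.T (-1))) ∧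
      ψ (Ideal.Quotient.mk (R2ideal P) X) =
        @algebraMap ℂ (R2P P) inferInstance inferInstance _ (ε * w) *
          (Ideal.Quotient.mk (R2ideal P) (C (LaurentPolynomial.T (-((n : ℤ) + 1)))) *
            Ideal.Quotient.mk (R2ideal P) X) ∧
      ψ ^ 2 = 1 := by
  have hkey : σ c hc (Polynomial.toLaurent P)
      = LaurentPolynomial.C (c ^ (n+1)) * (T (-(2*(n:ℤ)+2)) * Polynomial.toLaurent P) := by
    rw [hP]; exact key n a c hc γ hγ hprod
  have hε2 : ε ^ 2 = 1 := by rcases hε with h | h <;> simp [h]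
  have hs2 : (ε * w) ^ 2 = c ^ (n + 1) := by rw [mul_pow, hε2, one_mul, hw]
  have mkmul : ∀ p q : Polynomial (LaurentPolynomial ℂ),
      Ideal.Quotient.mk (R2ideal P) p * Ideal.Quotient.mk (R2ideal P) q
        = Ideal.Quotient.mk (R2ideal P) (p * q) := fun p q => (map_mul _ p q).symm
  have algmul : ∀ x y : ℂ, @algebraMap ℂ (R2P P) inferInstance inferInstance _ x * @algebraMap ℂ (R2P P) inferInstance inferInstance _ y
      = @algebraMap ℂ (R2P P) inferInstance inferInstance _ (x * y) := fun x y => (map_mul _ x y).symm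
  have hXsq : Ideal.Quotient.mk (R2ideal P) (X : Polynomial (LaurentPolynomial ℂ))
      * Ideal.Quotient.mk (R2ideal P) X
      = Ideal.Quotient.mk (R2ideal P) (C (Polynomial.toLaurent P)) := by
    rw [mkmul]
    refine Ideal.Quotient.eq.mpr ?_
    have h : (X : Polynomial (LaurentPolynomial ℂ)) * X - C (Polynomial.toLaurent P)
        = X ^ 2 - C (Polynomial.toLaurent P) := by ring
    rw [h]
    exact Ideal.subset_span rfl
  have hgen : Φ P c (ε * w) hc n ((X : Polynomial (LaurentPolynomial ℂ)) ^ 2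
      - C (Polynomial.toLaurent P)) = 0 := by
    have hXX : ((X : Polynomial (LaurentPolynomial ℂ)) ^ 2 - C (Polynomial.toLaurent P))
        = X * X - C (Polynomial.toLaurent P) := by ring
    rw [hXX, map_sub, map_mul, Φ_X, Φ_C, hkey]
    have E : (@algebraMap ℂ (R2P P) inferInstance inferInstance _ (ε * w)
          * Ideal.Quotient.mk (R2ideal P) (C (T (-((n:ℤ)+1))) * X))
        * (@algebraMap ℂ (R2P P) inferInstance inferInstance _ (ε * w)
          * Ideal.Quotient.mk (R2ideal P) (C (T (-((n:ℤ)+1))) * X))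
        = Ideal.Quotient.mk (R2ideal P)
            (C (LaurentPolynomial.C (c ^ (n+1)) * (T (-(2*(n:ℤ)+2)) * Polynomial.toLaurent P))) := by
      have hM : Ideal.Quotient.mk (R2ideal P) (C (T (-((n:ℤ)+1))) * X)
          = Ideal.Quotient.mk (R2ideal P) (C (T (-((n:ℤ)+1)))) * Ideal.Quotient.mk (R2ideal P) X :=
        map_mul _ _ _
      calc (@algebraMap ℂ (R2P P) inferInstance inferInstance _ (ε * w)
              * Ideal.Quotient.mk (R2ideal P) (C (T (-((n:ℤ)+1))) * X))
            * (@algebraMap ℂ (R2P P) inferInstance inferInstance _ (ε * w)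
              * Ideal.Quotient.mk (R2ideal P) (C (T (-((n:ℤ)+1))) * X))
          = (@algebraMap ℂ (R2P P) inferInstance inferInstance _ (ε * w) * @algebraMap ℂ (R2P P) inferInstance inferInstance _ (ε * w))
            * ((Ideal.Quotient.mk (R2ideal P) (C (T (-((n:ℤ)+1))))
                * Ideal.Quotient.mk (R2ideal P) (C (T (-((n:ℤ)+1)))))
              * (Ideal.Quotient.mk (R2ideal P) X * Ideal.Quotient.mk (R2ideal P) X)) := by
            rw [hM]; ring
        _ = @algebraMap ℂ (R2P P) inferInstance inferInstance _ (c ^ (n+1))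
            * (Ideal.Quotient.mk (R2ideal P) (C (T (-((n:ℤ)+1))) * C (T (-((n:ℤ)+1))))
              * Ideal.Quotient.mk (R2ideal P) (C (Polynomial.toLaurent P))) := by
            rw [algmul, mkmul, hXsq]
            have : (ε * w) * (ε * w) = c ^ (n+1) := by rw [← hs2]; ring
            rw [this]
        _ = @algebraMap ℂ (R2P P) inferInstance inferInstance _ (c ^ (n+1))
            * Ideal.Quotient.mk (R2ideal P)
                ((C (T (-((n:ℤ)+1))) * C (T (-((n:ℤ)+1)))) * C (Polynomial.toLaurent P)) := by
            rw [mkmul]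
        _ = Ideal.Quotient.mk (R2ideal P)
              (C (LaurentPolynomial.C (c ^ (n+1)))
                * ((C (T (-((n:ℤ)+1))) * C (T (-((n:ℤ)+1)))) * C (Polynomial.toLaurent P))) := by
            rw [mk_LC, mkmul]
        _ = Ideal.Quotient.mk (R2ideal P)
              (C (LaurentPolynomial.C (c ^ (n+1)) * (T (-(2*(n:ℤ)+2)) * Polynomial.toLaurent P))) := by
            congr 1
            have hT2 : (T (-((n:ℤ)+1)) : LaurentPolynomial ℂ) * T (-((n:ℤ)+1)) = T (-(2*(n:ℤ)+2)) := by
              rw [← LaurentPolynomial.T_add]; congr 1; ring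
            rw [← Polynomial.C_mul, hT2, ← Polynomial.C_mul, ← Polynomial.C_mul]
    rw [E]
    exact sub_self _
  have h0 : ∀ p ∈ R2ideal P, Φ P c (ε * w) hc n p = 0 := by
    intro p hp
    rw [Ideal.mem_span_singleton] at hp
    obtain ⟨r, rfl⟩ := hp
    rw [map_mul, hgen]
    ring
  set ψ0 : R2P P →ₐ[ℂ] R2P P := Ideal.Quotient.liftₐ (R2ideal P) (Φ P c (ε * w) hc n) h0 with hψ0
  have ψ0_mk : ∀ p, ψ0 (Ideal.Quotient.mk (R2ideal P) p) = Φ P c (ε * w) hc n p := fun p =>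
    DFunLike.congr_fun (Ideal.Quotient.liftₐ_comp (R2ideal P) (Φ P c (ε * w) hc n) h0) p
  have hTpsi : ∀ m : ℤ, ψ0 (Ideal.Quotient.mk (R2ideal P) (C (T m)))
      = @algebraMap ℂ (R2P P) inferInstance inferInstance _ (c ^ m)
        * Ideal.Quotient.mk (R2ideal P) (C (T (-m))) := by
    intro m; rw [ψ0_mk, Φ_T]
  have hT1 : ψ0 (Ideal.Quotient.mk (R2ideal P) (C (T 1)))
      = @algebraMap ℂ (R2P P) inferInstance inferInstance _ c * Ideal.Quotient.mk (R2ideal P) (C (T (-1))) := by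
    have := hTpsi 1
    rw [zpow_one] at this
    exact this
  have hTm1 : ψ0 (Ideal.Quotient.mk (R2ideal P) (C (T (-1))))
      = @algebraMap ℂ (R2P P) inferInstance inferInstance _ c⁻¹ * Ideal.Quotient.mk (R2ideal P) (C (T 1)) := by
    have := hTpsi (-1)
    rw [zpow_neg, zpow_one, neg_neg] at this
    exact this
  have hTe : ψ0 (Ideal.Quotient.mk (R2ideal P) (C (T (-((n:ℤ)+1)))))
      = @algebraMap ℂ (R2P P) inferInstance inferInstance _ ((c ^ (n+1))⁻¹)
        * Ideal.Quotient.mk (R2ideal P) (C (T ((n:ℤ)+1))) := by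
    have hzc : (c : ℂ) ^ (-((n:ℤ)+1)) = (c ^ (n+1))⁻¹ := by
      rw [zpow_neg]
      norm_cast
    have := hTpsi (-((n:ℤ)+1))
    rw [hzc, neg_neg] at this
    exact this
  have hXpsi : ψ0 (Ideal.Quotient.mk (R2ideal P) X)
      = @algebraMap ℂ (R2P P) inferInstance inferInstance _ (ε * w)
        * Ideal.Quotient.mk (R2ideal P) (C (T (-((n:ℤ)+1))) * X) := by
    rw [ψ0_mk, Φ_X]
  have hM : Ideal.Quotient.mk (R2ideal P) (C (T (-((n:ℤ)+1))) * X)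
      = Ideal.Quotient.mk (R2ideal P) (C (T (-((n:ℤ)+1)))) * Ideal.Quotient.mk (R2ideal P) X :=
    map_mul _ _ _
  have goal1 : ψ0 (ψ0 (Ideal.Quotient.mk (R2ideal P) (C (T 1))))
      = Ideal.Quotient.mk (R2ideal P) (C (T 1)) := by
    rw [hT1, map_mul ψ0, AlgHom.commutes, hTm1]
    calc @algebraMap ℂ (R2P P) inferInstance inferInstance _ c
          * (@algebraMap ℂ (R2P P) inferInstance inferInstance _ c⁻¹ * Ideal.Quotient.mk (R2ideal P) (C (T 1)))
        = (@algebraMap ℂ (R2P P) inferInstance inferInstance _ c * @algebraMap ℂ (R2P P) inferInstance inferInstance _ c⁻¹)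
            * Ideal.Quotient.mk (R2ideal P) (C (T 1)) := by ring
      _ = Ideal.Quotient.mk (R2ideal P) (C (T 1)) := by
          rw [algmul, mul_inv_cancel₀ hc, map_one]; ring
  have goal2 : ψ0 (ψ0 (Ideal.Quotient.mk (R2ideal P) X))
      = Ideal.Quotient.mk (R2ideal P) X := by
    rw [hXpsi, map_mul ψ0, AlgHom.commutes, hM, map_mul ψ0, hTe, hXpsi, hM]
    have hsc : (ε * w) * (((c ^ (n+1))⁻¹) * (ε * w)) = 1 := by
      field_simp
      linear_combination hs2
    have hTT : Ideal.Quotient.mk (R2ideal P) (C (T ((n:ℤ)+1)))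
        * Ideal.Quotient.mk (R2ideal P) (C (T (-((n:ℤ)+1))))
        = 1 := by
      rw [mkmul, ← Polynomial.C_mul, ← LaurentPolynomial.T_add]
      have h1 : ((n:ℤ)+1) + (-((n:ℤ)+1)) = 0 := by ring
      rw [h1, LaurentPolynomial.T_zero, Polynomial.C_1, map_one]
    calc @algebraMap ℂ (R2P P) inferInstance inferInstance _ (ε * w)
          * ((@algebraMap ℂ (R2P P) inferInstance inferInstance _ ((c ^ (n+1))⁻¹)
              * Ideal.Quotient.mk (R2ideal P) (C (T ((n:ℤ)+1))))
            * (@algebraMap ℂ (R2P P) inferInstance inferInstance _ (ε * w)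
              * (Ideal.Quotient.mk (R2ideal P) (C (T (-((n:ℤ)+1))))
                * Ideal.Quotient.mk (R2ideal P) X)))
        = (@algebraMap ℂ (R2P P) inferInstance inferInstance _ (ε * w)
            * (@algebraMap ℂ (R2P P) inferInstance inferInstance _ ((c ^ (n+1))⁻¹) * @algebraMap ℂ (R2P P) inferInstance inferInstance _ (ε * w)))
          * ((Ideal.Quotient.mk (R2ideal P) (C (T ((n:ℤ)+1)))
              * Ideal.Quotient.mk (R2ideal P) (C (T (-((n:ℤ)+1)))))
            * Ideal.Quotient.mk (R2ideal P) X) := by ring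
      _ = Ideal.Quotient.mk (R2ideal P) X := by
          rw [algmul, algmul, hsc, map_one, hTT]; ring
  have hcomp : ψ0.comp ψ0 = AlgHom.id ℂ (R2P P) := by
    apply Ideal.Quotient.algHom_ext
    apply Polynomial.algHom_ext'
    · apply laurent_algHom_ext
      simpa using goal1
    · simpa using goal2
  have hcoe : ∀ y, (AlgEquiv.ofAlgHom ψ0 ψ0 hcomp hcomp) y = ψ0 y := fun y => rfl
  refine ⟨AlgEquiv.ofAlgHom ψ0 ψ0 hcomp hcomp, ?_, ?_, ?_⟩
  · rw [hcoe, hT1]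
  · rw [hcoe, hXpsi, hM]
  · apply AlgEquiv.ext
    intro x
    have hp2 : (AlgEquiv.ofAlgHom ψ0 ψ0 hcomp hcomp) ^ 2
        = (AlgEquiv.ofAlgHom ψ0 ψ0 hcomp hcomp) * (AlgEquiv.ofAlgHom ψ0 ψ0 hcomp hcomp) := sq _
    rw [hp2, AlgEquiv.mul_apply, AlgEquiv.one_apply, hcoe, hcoe]
    exact DFunLike.congr_fun hcomp x
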